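/- If nodes (i,t) and (j,t') are related by a bound guarantee, i.e., t + D(i,j) ≤ t', then (i,t) ⤳ (j,t') holds in every run r. -/

import Mathlib

/-- Syncausality in a run. -/
inductive Sync {P : Type*} (b : P → P → ℕ) (nbr : P → P → Prop)
    (msg : P → ℕ → P → ℕ → Prop) (noMsg : P → ℕ → P → Prop) :
    P × ℕ → P × ℕ → Prop
  | loc {i : P} {t t' : ℕ} : t ≤ t' → Sync b nbr msg noMsg (i, t) (i, t')
  | message {i j : P} {t t' : ℕ} : msg i t j t' → Sync b nbr msg noMsg (i, t) (j, t')
  | timeout {i j : P} {t : ℕ} : nbr i j → noMsg i t j →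
      Sync b nbr msg noMsg (i, t) (j, t + b i j)
  | trans {α β γ : P × ℕ} : Sync b nbr msg noMsg α β → Sync b nbr msg noMsg β γ →
      Sync b nbr msg noMsg α γ

/-- `PathDist b nbr i j d` : there is a directed path from `i` to `j` of total weight `d`. -/
inductive PathDist {P : Type*} (b : P → P → ℕ) (nbr : P → P → Prop) : P → P → ℕ → Prop
  | refl (i : P) : PathDist b nbr i i 0
  | step {i j k : P} {d : ℕ} : nbr i j → PathDist b nbr j k d →
      PathDist b nbr i k (b i j + d)

/-- Transmission distance: the minimal weight of a directed path from `i` to `j`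
(`⊤` if there is none). -/
noncomputable def transDist {P : Type*} (b : P → P → ℕ) (nbr : P → P → Prop)
    (i j : P) : ℕ∞ :=
  sInf {d : ℕ∞ | ∃ n : ℕ, PathDist b nbr i j n ∧ d = (n : ℕ∞)}

/-- If (i,t) ⇢ (j,t'), i.e. t + D(i,j) ≤ t', then (i,t) ⤳ (j,t') in every run. -/
theorem stmt2 {P : Type*} [Finite P] (b : P → P → ℕ) (nbr : P → P → Prop)
    (msg : P → ℕ → P → ℕ → Prop) (noMsg : P → ℕ → P → Prop)
    (hb : ∀ i j, 1 ≤ b i j)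
    (hmsg : ∀ i t j t', msg i t j t' → nbr i j ∧ t < t' ∧ t' ≤ t + b i j)
    (htotal : ∀ i j t, nbr i j →
      (∃ t', msg i t j t' ∧ t' ≤ t + b i j) ∨ noMsg i t j)
    (i j : P) (t t' : ℕ)
    (hguar : (t : ℕ∞) + transDist b nbr i j ≤ (t' : ℕ∞)) :
    Sync b nbr msg noMsg (i, t) (j, t') := by
  -- neighbor step
  have hstep : ∀ (a c : P) (s : ℕ), nbr a c →
      Sync b nbr msg noMsg (a, s) (c, s + b a c) := by
    intro a c s hac
    rcases htotal a c s hac with ⟨s', hm, hle⟩ | hno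
    · exact Sync.trans (Sync.message hm) (Sync.loc hle)
    · exact Sync.timeout hac hno
  -- path gives syncausality
  have hpath : ∀ {a c : P} {n : ℕ}, PathDist b nbr a c n → ∀ s : ℕ,
      Sync b nbr msg noMsg (a, s) (c, s + n) := by
    intro a c n hp
    induction hp with
    | refl a => intro s; exact Sync.loc (by omega)
    | @step a x c d hax _ ih =>
        intro s
        have h1 := hstep a x s hax
        have h2 := ih (s + b a x)
        have : s + (b a x + d) = s + b a x + d := by omega
        rw [this]
        exact Sync.trans h1 h2
  -- extract a path of weight n with t + n ≤ t'
  set S : Set ℕ∞ := {d : ℕ∞ | ∃ n : ℕ, PathDist b nbr i j n ∧ d = (n : ℕ∞)}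
  have hne : transDist b nbr i j ≠ ⊤ := by
    intro h
    rw [h] at hguar
    simp at hguar
  have hlt : sInf S < ⊤ := lt_top_iff_ne_top.mpr hne
  obtain ⟨d, hdS, -⟩ := sInf_lt_iff.mp hlt
  obtain ⟨n0, hn0, rfl⟩ := hdS
  set T : Set ℕ := {n : ℕ | PathDist b nbr i j n}
  have hTne : T.Nonempty := ⟨n0, hn0⟩
  have hmem : sInf T ∈ T := Nat.sInf_mem hTne
  have hlb : (((sInf T : ℕ)) : ℕ∞) ≤ transDist b nbr i j := by
    apply le_sInf
    rintro d ⟨m, hm, rfl⟩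
    exact_mod_cast Nat.sInf_le hm
  have hle : (t : ℕ∞) + (((sInf T : ℕ)) : ℕ∞) ≤ (t' : ℕ∞) :=
    le_trans (add_le_add_right hlb _) hguar
  have hle' : t + sInf T ≤ t' := by exact_mod_cast hle
  exact Sync.trans (hpath hmem t) (Sync.loc hle')
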